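/- Let E be a complex Banach algebra, n₀ a positive integer, r ∈ (0,1) and θ ∈ [0,∞). Suppose f : E → E satisfies f(0) = 0, ‖D_λ f(x,y)‖ ≤ θ(‖x‖^r + ‖y‖^r) for all x, y ∈ E and all λ ∈ T¹_{1/n₀}, ‖f(xy) − f(y)f(x)‖ ≤ θ(‖x‖^r + ‖y‖^r) for all x, y ∈ E, and for every x ∈ E the limits below exist and satisfy lim_{m→∞} 2^{−m} f(2^m · lim_{n→∞} 2^{−n} f(2^n x)) = x. Then there exists a unique involution I : E → E satisfying ‖I(x) − f(x)‖ ≤ (2θ/(2 − 2^r))·‖x‖^r for all x ∈ E. -/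

import Mathlib

open Filter Topology

/-- `D_λ f (x, y) = 2 conj(λ) f((x+y)/2) - f(λx) - f(λy)`. -/
noncomputable def jensenDiff {E : Type*} [NormedRing E] [NormedAlgebra ℂ E]
    (f : E → E) (l : ℂ) (x y : E) : E :=
  (2 * (starRingEnd ℂ) l) • f ((2 : ℂ)⁻¹ • (x + y)) - f (l • x) - f (l • y)

/-- The arc `T¹_{1/n₀} = {e^{iθ} : 0 ≤ θ ≤ 1/n₀}` of the unit circle. -/
def unitArc (n₀ : ℕ) : Set ℂ :=
  {l : ℂ | ∃ θ : ℝ, 0 ≤ θ ∧ θ ≤ 1 / (n₀ : ℝ) ∧ l = Complex.exp (θ * Complex.I)}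

/-- An involution on a complex algebra: conjugate-linear, anti-multiplicative,
and an involution of order two. -/
def IsInvolution {E : Type*} [NormedRing E] [NormedAlgebra ℂ E] (I : E → E) : Prop :=
  (∀ (x y : E) (l m : ℂ),
      I (l • x + m • y) = (starRingEnd ℂ) l • I x + (starRingEnd ℂ) m • I y) ∧
  (∀ x y : E, I (x * y) = I y * I x) ∧
  (∀ x : E, I (I x) = x)

set_option maxHeartbeats 1000000 in
theorem stability_involution_rpow_lt_one {E : Type*} [NormedRing E] [NormedAlgebra ℂ E] [CompleteSpace E]
    (n₀ : ℕ) (hn₀ : 0 < n₀) (r : ℝ) (hr0 : 0 < r) (hr1 : r < 1)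
    (θ : ℝ) (hθ : 0 ≤ θ)
    (f : E → E) (hf0 : f 0 = 0)
    (hD : ∀ x y : E, ∀ l ∈ unitArc n₀,
      ‖jensenDiff f l x y‖ ≤ θ * (‖x‖ ^ r + ‖y‖ ^ r))
    (hmul : ∀ x y : E, ‖f (x * y) - f y * f x‖ ≤ θ * (‖x‖ ^ r + ‖y‖ ^ r))
    (hlim : ∀ x : E, ∃ y : E,
      Tendsto (fun n : ℕ => ((2 : ℂ) ^ n)⁻¹ • f ((2 : ℂ) ^ n • x)) atTop (𝓝 y) ∧
      Tendsto (fun m : ℕ => ((2 : ℂ) ^ m)⁻¹ • f ((2 : ℂ) ^ m • y)) atTop (𝓝 x)) :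
    ∃ I : E → E, IsInvolution I ∧
      (∀ x : E, ‖I x - f x‖ ≤ 2 * θ / (2 - (2 : ℝ) ^ r) * ‖x‖ ^ r) ∧
      (∀ J : E → E, IsInvolution J →
        (∀ x : E, ‖J x - f x‖ ≤ 2 * θ / (2 - (2 : ℝ) ^ r) * ‖x‖ ^ r) → J = I) := by
  classical
  -- Numeric facts
  have h2r_pos : (0:ℝ) < (2:ℝ) ^ r := Real.rpow_pos_of_pos (by norm_num) r
  have h2r_lt : (2:ℝ) ^ r < 2 := by
    have := Real.rpow_lt_rpow_of_exponent_lt (x := (2:ℝ)) (by norm_num) hr1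
    simpa using this
  have hden : (0:ℝ) < 2 - (2:ℝ) ^ r := by linarith
  set q : ℝ := (2:ℝ) ^ r / 2 with hqdef
  have hq0 : 0 ≤ q := by positivity
  have hq1 : q < 1 := by rw [hqdef]; linarith [h2r_lt]
  have hnorm2n : ∀ n : ℕ, ‖(2:ℂ) ^ n‖ = 2 ^ n := by
    intro n; rw [norm_pow]; norm_num
  have hnorm2ninv : ∀ n : ℕ, ‖((2:ℂ) ^ n)⁻¹‖ = ((2:ℝ) ^ n)⁻¹ := by
    intro n; rw [norm_inv, hnorm2n]
  have hpow_rpow : ∀ n : ℕ, ((2:ℝ) ^ n) ^ r = ((2:ℝ) ^ r) ^ n := by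
    intro n
    rw [← Real.rpow_natCast 2 n, ← Real.rpow_natCast ((2:ℝ)^r) n,
      ← Real.rpow_mul (by norm_num), ← Real.rpow_mul (by norm_num), mul_comm]
  have hnorm_smul_pow : ∀ (n : ℕ) (x : E), ‖(2:ℂ) ^ n • x‖ = 2 ^ n * ‖x‖ := by
    intro n x; rw [norm_smul, hnorm2n]
  have hrpow_smul : ∀ (n : ℕ) (x : E), ‖(2:ℂ) ^ n • x‖ ^ r = ((2:ℝ)^r) ^ n * ‖x‖ ^ r := by
    intro n x
    rw [hnorm_smul_pow, Real.mul_rpow (by positivity) (norm_nonneg x), hpow_rpow]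
  -- membership of 1 in the arc
  have h1arc : (1:ℂ) ∈ unitArc n₀ := by
    refine ⟨0, le_refl 0, by positivity, by simp⟩
  -- the basic doubling estimate
  have key0 : ∀ z : E, ‖f ((2:ℂ) • z) - (2:ℂ) • f z‖ ≤ θ * (2:ℝ)^r * ‖z‖ ^ r := by
    intro z
    have h := hD ((2:ℂ) • z) 0 1 h1arc
    have hz : (2:ℂ)⁻¹ • ((2:ℂ) • z + 0) = z := by
      rw [add_zero, smul_smul]; norm_num
    have hnz : ‖(2:ℂ) • z‖ = 2 * ‖z‖ := by
      rw [norm_smul]; norm_num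
    simp only [jensenDiff, map_one, mul_one, one_smul, hz, hf0, norm_zero, sub_zero] at h
    have h0 : (0:ℝ) ^ r = 0 := Real.zero_rpow (ne_of_gt hr0)
    rw [h0, add_zero, hnz, Real.mul_rpow (by norm_num) (norm_nonneg z)] at h
    calc ‖f ((2:ℂ) • z) - (2:ℂ) • f z‖ = ‖(2:ℂ) • f z - f ((2:ℂ)•z)‖ := by rw [norm_sub_rev]
      _ ≤ θ * ((2:ℝ)^r * ‖z‖ ^ r) := h
      _ = θ * (2:ℝ)^r * ‖z‖ ^ r := by ring
  -- the approximating sequence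
  let S : ℕ → E → E := fun n x => ((2 : ℂ) ^ n)⁻¹ • f ((2 : ℂ) ^ n • x)
  have hS0 : ∀ x, S 0 x = f x := by intro x; simp [S]
  have hstep : ∀ (n : ℕ) (x : E),
      ‖S (n+1) x - S n x‖ ≤ (θ * (2:ℝ)^r / 2) * q ^ n * ‖x‖ ^ r := by
    intro n x
    have e1 : S (n+1) x - S n x
        = ((2:ℂ) ^ (n+1))⁻¹ • (f ((2:ℂ) • ((2:ℂ)^n • x)) - (2:ℂ) • f ((2:ℂ)^n • x)) := by
      have a1 : (2:ℂ)^(n+1) • x = (2:ℂ) • ((2:ℂ)^n • x) := by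
        rw [smul_smul, ← pow_succ']
      have a2 : ((2:ℂ)^(n+1))⁻¹ • ((2:ℂ) • f ((2:ℂ)^n • x)) = ((2:ℂ)^n)⁻¹ • f ((2:ℂ)^n • x) := by
        rw [smul_smul]
        congr 1
        rw [pow_succ']
        have h2 : (2:ℂ) ≠ 0 := two_ne_zero
        have hn : (2:ℂ)^n ≠ 0 := pow_ne_zero n h2
        field_simp
      simp only [S, smul_sub, a1, a2]
    rw [e1, norm_smul, hnorm2ninv]
    have h2 := key0 ((2:ℂ)^n • x)
    rw [hrpow_smul] at h2
    calc ((2:ℝ) ^ (n+1))⁻¹ * ‖f ((2:ℂ) • ((2:ℂ)^n • x)) - (2:ℂ) • f ((2:ℂ)^n • x)‖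
        ≤ ((2:ℝ) ^ (n+1))⁻¹ * (θ * (2:ℝ)^r * (((2:ℝ)^r) ^ n * ‖x‖ ^ r)) := by
          apply mul_le_mul_of_nonneg_left h2 (by positivity)
      _ = (θ * (2:ℝ)^r / 2) * q ^ n * ‖x‖ ^ r := by
          rw [hqdef, div_pow]; field_simp; ring
  have htel : ∀ (n : ℕ) (x : E),
      ‖S n x - f x‖ ≤ (θ * (2:ℝ)^r / 2) * (∑ k ∈ Finset.range n, q ^ k) * ‖x‖ ^ r := by
    intro n x
    induction n with
    | zero => simp [hS0]
    | succ n ih =>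
      have : S (n+1) x - f x = (S (n+1) x - S n x) + (S n x - f x) := by abel
      rw [this]
      calc ‖(S (n+1) x - S n x) + (S n x - f x)‖
          ≤ ‖S (n+1) x - S n x‖ + ‖S n x - f x‖ := norm_add_le _ _
        _ ≤ (θ * (2:ℝ)^r / 2) * q ^ n * ‖x‖ ^ r
            + (θ * (2:ℝ)^r / 2) * (∑ k ∈ Finset.range n, q ^ k) * ‖x‖ ^ r :=
              add_le_add (hstep n x) ih
        _ = (θ * (2:ℝ)^r / 2) * (∑ k ∈ Finset.range (n+1), q ^ k) * ‖x‖ ^ r := by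
            rw [Finset.sum_range_succ]; ring
  have hbound : ∀ (n : ℕ) (x : E),
      ‖S n x - f x‖ ≤ 2 * θ / (2 - (2:ℝ)^r) * ‖x‖ ^ r := by
    intro n x
    refine (htel n x).trans ?_
    have hsum : (∑ k ∈ Finset.range n, q ^ k) ≤ 1 / (1 - q) := by
      have h1 := Summable.sum_le_tsum (Finset.range n) (fun i _ => by positivity)
        (summable_geometric_of_lt_one hq0 hq1)
      rw [tsum_geometric_of_lt_one hq0 hq1] at h1
      rw [one_div]
      exact h1
    have h1 : (θ * (2:ℝ)^r / 2) * (∑ k ∈ Finset.range n, q ^ k) * ‖x‖ ^ r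
        ≤ (θ * (2:ℝ)^r / 2) * (1 / (1-q)) * ‖x‖ ^ r := by
      apply mul_le_mul_of_nonneg_right _ (by positivity)
      apply mul_le_mul_of_nonneg_left hsum (by positivity)
    refine h1.trans ?_
    apply mul_le_mul_of_nonneg_right _ (by positivity)
    have h1q : (0:ℝ) < 1 - q := by linarith
    have heq : (θ * (2:ℝ)^r / 2) * (1 / (1-q)) = θ * (2:ℝ)^r / (2 - (2:ℝ)^r) := by
      rw [hqdef]
      field_simp
    rw [heq, div_le_div_iff₀ hden hden]
    nlinarith [mul_nonneg hθ (mul_nonneg hden.le hden.le)]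
  -- definition of the limit map g
  let g : E → E := fun x => (hlim x).choose
  have hg : ∀ x, Tendsto (fun n : ℕ => S n x) atTop (𝓝 (g x)) :=
    fun x => (hlim x).choose_spec.1
  have hgg : ∀ x, g (g x) = x :=
    fun x => tendsto_nhds_unique (hg (g x)) (hlim x).choose_spec.2
  have hg0 : g 0 = 0 := by
    have : ∀ n : ℕ, S n (0:E) = 0 := by intro n; simp [S, hf0]
    have h := hg (0:E)
    simp only [this] at h
    exact tendsto_nhds_unique h tendsto_const_nhds
  have hgf : ∀ x : E, ‖g x - f x‖ ≤ 2 * θ / (2 - (2:ℝ)^r) * ‖x‖ ^ r := by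
    intro x
    have h1 : Tendsto (fun n : ℕ => ‖S n x - f x‖) atTop (𝓝 ‖g x - f x‖) :=
      ((hg x).sub tendsto_const_nhds).norm
    exact le_of_tendsto h1 (Eventually.of_forall fun n => hbound n x)
  -- exact Jensen equation for g
  have hJensen : ∀ l ∈ unitArc n₀, ∀ x y : E,
      (2 * (starRingEnd ℂ) l) • g ((2:ℂ)⁻¹ • (x + y)) - g (l • x) - g (l • y) = 0 := by
    intro l hl x y
    have hterm : ∀ n : ℕ,
        (2 * (starRingEnd ℂ) l) • S n ((2:ℂ)⁻¹ • (x + y)) - S n (l • x) - S n (l • y)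
          = ((2:ℂ)^n)⁻¹ • jensenDiff f l ((2:ℂ)^n • x) ((2:ℂ)^n • y) := by
      intro n
      simp only [jensenDiff, S, smul_sub]
      congr 2
      · rw [smul_comm]
        congr 2
        rw [← smul_add, smul_comm]
      · congr 1; rw [smul_comm]
      · congr 1; rw [smul_comm]
    have hto0 : Tendsto (fun n : ℕ =>
        (2 * (starRingEnd ℂ) l) • S n ((2:ℂ)⁻¹ • (x + y)) - S n (l • x) - S n (l • y))
        atTop (𝓝 0) := by
      apply squeeze_zero_norm (a := fun n => θ * (‖x‖^r + ‖y‖^r) * q ^ n)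
      · intro n
        rw [hterm n, norm_smul, hnorm2ninv]
        have hb := hD ((2:ℂ)^n • x) ((2:ℂ)^n • y) l hl
        rw [hrpow_smul, hrpow_smul] at hb
        calc ((2:ℝ)^n)⁻¹ * ‖jensenDiff f l ((2:ℂ)^n • x) ((2:ℂ)^n • y)‖
            ≤ ((2:ℝ)^n)⁻¹ * (θ * (((2:ℝ)^r)^n * ‖x‖^r + ((2:ℝ)^r)^n * ‖y‖^r)) :=
              mul_le_mul_of_nonneg_left hb (by positivity)
          _ = θ * (‖x‖^r + ‖y‖^r) * q ^ n := by
              rw [hqdef, div_pow]; field_simp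
      · have := (tendsto_pow_atTop_nhds_zero_of_lt_one hq0 hq1).const_mul (θ * (‖x‖^r + ‖y‖^r))
        simpa using this
    have hto : Tendsto (fun n : ℕ =>
        (2 * (starRingEnd ℂ) l) • S n ((2:ℂ)⁻¹ • (x + y)) - S n (l • x) - S n (l • y))
        atTop (𝓝 ((2 * (starRingEnd ℂ) l) • g ((2:ℂ)⁻¹ • (x + y)) - g (l • x) - g (l • y))) :=
      (((hg _).const_smul _).sub (hg _)).sub (hg _)
    exact tendsto_nhds_unique hto hto0
  -- additivity
  have ghalf : ∀ x : E, (2:ℂ) • g ((2:ℂ)⁻¹ • x) = g x := by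
    intro x
    have h := hJensen 1 h1arc x 0
    simp only [map_one, mul_one, one_smul, add_zero, hg0, sub_zero] at h
    exact sub_eq_zero.mp h
  have gadd : ∀ x y : E, g (x + y) = g x + g y := by
    intro x y
    have h := hJensen 1 h1arc x y
    simp only [map_one, mul_one, one_smul] at h
    have h2 := ghalf (x + y)
    have h3 : (2:ℂ) • g ((2:ℂ)⁻¹ • (x+y)) - g x - g y = 0 := h
    have : g (x + y) - g x - g y = 0 := by rw [← h2]; exact h3
    have := sub_eq_zero.mp (by rw [sub_sub] at this; exact this)
    rw [this]
  -- homogeneity on the arc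
  have harc : ∀ l ∈ unitArc n₀, ∀ x : E, g (l • x) = (starRingEnd ℂ) l • g x := by
    intro l hl x
    have h := hJensen l hl x x
    have hx : (2:ℂ)⁻¹ • (x + x) = x := by
      rw [← two_smul ℂ x, smul_smul]
      norm_num
    rw [hx] at h
    have h2 : (2 * (starRingEnd ℂ) l) • g x = (2:ℂ) • g (l • x) := by
      have h3 := sub_eq_zero.mp (by rw [sub_sub] at h; exact h)
      rw [h3, two_smul]
    have h4 := congrArg (fun z : E => (2:ℂ)⁻¹ • z) h2
    simp only [smul_smul] at h4
    norm_num at h4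
    rw [← h4]
    congr 1
    ring
  -- the set of scalars for which conjugate homogeneity holds
  set P : ℂ → Prop := fun l => ∀ x : E, g (l • x) = (starRingEnd ℂ) l • g x with hPdef
  have P1 : P 1 := by intro x; simp
  have Padd : ∀ l m, P l → P m → P (l + m) := by
    intro l m hl hm x
    rw [add_smul, gadd, hl, hm, map_add, add_smul]
  have Pmul : ∀ l m, P l → P m → P (l * m) := by
    intro l m hl hm x
    rw [mul_smul, hl, hm, map_mul, mul_smul]
  have Ppow : ∀ (l : ℂ), P l → ∀ (k : ℕ), P (l ^ k) := by
    intro l hl k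
    induction k with
    | zero => simpa using P1
    | succ k ih => rw [pow_succ]; exact Pmul _ _ ih hl
  have Pnat : ∀ k : ℕ, P (k : ℂ) := by
    intro k
    induction k with
    | zero => intro x; simp [hg0]
    | succ k ih =>
      push_cast
      exact Padd _ _ ih P1
  have Pexp : ∀ s : ℝ, 0 ≤ s → P (Complex.exp (s * Complex.I)) := by
    intro s hs
    set k : ℕ := ⌈s * n₀⌉₊ + 1 with hk
    have hkpos : (0:ℝ) < k := by positivity
    have hn₀pos : (0:ℝ) < n₀ := by exact_mod_cast hn₀
    have harcmem : Complex.exp ((s / k : ℝ) * Complex.I) ∈ unitArc n₀ := by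
      refine ⟨s / k, by positivity, ?_, rfl⟩
      rw [div_le_div_iff₀ hkpos hn₀pos, one_mul]
      calc s * n₀ ≤ (⌈s * n₀⌉₊ : ℝ) := Nat.le_ceil _
        _ ≤ (k : ℝ) := by rw [hk]; push_cast; linarith
    have hkne : (k:ℂ) ≠ 0 := by
      have : k ≠ 0 := by rw [hk]; exact Nat.succ_ne_zero _
      exact_mod_cast this
    have hpow : Complex.exp ((s:ℝ) * Complex.I) = (Complex.exp ((s/k : ℝ) * Complex.I)) ^ k := by
      rw [← Complex.exp_nat_mul]
      congr 1
      rw [Complex.ofReal_div, Complex.ofReal_natCast, ← mul_assoc]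
      rw [mul_div_cancel₀ _ hkne]
    rw [hpow]
    exact Ppow _ (fun x => harc _ harcmem x) k
  have Pcircle : ∀ z : ℂ, ‖z‖ = 1 → P z := by
    intro z hz
    have hz' : (‖z‖ : ℂ) * Complex.exp (z.arg * Complex.I) = z :=
      Complex.norm_mul_exp_arg_mul_I z
    rw [hz, Complex.ofReal_one, one_mul] at hz'
    rcases le_or_gt 0 z.arg with h | h
    · rw [← hz']
      exact Pexp _ h
    · have h2 : z = Complex.exp ((z.arg + 2*Real.pi : ℝ) * Complex.I) := by
        rw [Complex.ofReal_add, add_mul, Complex.exp_add]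
        have h1 : Complex.exp (((2*Real.pi : ℝ):ℂ) * Complex.I) = 1 := by
          push_cast
          exact Complex.exp_two_pi_mul_I
        rw [h1, mul_one]
        exact hz'.symm
      rw [h2]
      exact Pexp _ (by linarith [Complex.neg_pi_lt_arg z, Real.pi_pos])
  have Preal2 : ∀ t : ℝ, |t| ≤ 2 → P (t : ℂ) := by
    intro t ht
    have hb := abs_le.mp ht
    set a := Real.arccos (t/2) with ha
    have hcos : Real.cos a = t/2 := Real.cos_arccos (by linarith) (by linarith)
    have h1 : (t:ℂ) = Complex.exp ((a:ℝ) * Complex.I) + Complex.exp ((-a:ℝ) * Complex.I) := by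
      push_cast
      rw [Complex.exp_mul_I, Complex.exp_mul_I, Complex.cos_neg, Complex.sin_neg]
      have : Complex.cos (a:ℂ) = ((t/2 : ℝ) : ℂ) := by
        rw [← Complex.ofReal_cos, hcos]
      rw [this]
      push_cast
      ring
    have hP := Padd _ _ (Pcircle _ (Complex.norm_exp_ofReal_mul_I a))
      (Pcircle _ (Complex.norm_exp_ofReal_mul_I (-a)))
    rw [← h1] at hP
    exact hP
  have Preal : ∀ t : ℝ, P (t : ℂ) := by
    intro t
    set m : ℕ := ⌈|t|⌉₊ + 1 with hm
    have hmpos : (0:ℝ) < m := by positivity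
    have h2 : |t / m| ≤ 2 := by
      rw [abs_div, abs_of_pos hmpos, div_le_iff₀ hmpos]
      calc |t| ≤ (⌈|t|⌉₊ : ℝ) := Nat.le_ceil _
        _ ≤ (m:ℝ) := by rw [hm]; push_cast; linarith
        _ ≤ 2 * m := by linarith
    have h3 : (t:ℂ) = (m:ℂ) * ((t/m : ℝ) : ℂ) := by
      have hmne : (m:ℂ) ≠ 0 := by
        have : m ≠ 0 := by rw [hm]; exact Nat.succ_ne_zero _
        exact_mod_cast this
      rw [Complex.ofReal_div, Complex.ofReal_natCast, mul_div_cancel₀ _ hmne]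
    rw [h3]
    exact Pmul _ _ (Pnat m) (Preal2 _ h2)
  have Pall : ∀ l : ℂ, P l := by
    intro l
    rcases eq_or_ne l 0 with rfl | hl
    · intro x; simp [hg0]
    · have habsne : ‖l‖ ≠ 0 := by
        simpa using hl
      have habs : ‖l / (‖l‖ : ℂ)‖ = 1 := by
        rw [norm_div, Complex.norm_real, Real.norm_eq_abs, abs_of_nonneg (norm_nonneg l),
          div_self habsne]
      have hcne : ((‖l‖ : ℝ):ℂ) ≠ 0 := Complex.ofReal_ne_zero.mpr habsne
      have h3 : l = ((‖l‖ : ℝ) : ℂ) * (l / (‖l‖ : ℂ)) := by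
        rw [mul_comm, div_mul_cancel₀ _ hcne]
      rw [h3]
      exact Pmul _ _ (Preal _) (Pcircle _ habs)
  -- conjugate linearity of g
  have glin : ∀ (x y : E) (l m : ℂ),
      g (l • x + m • y) = (starRingEnd ℂ) l • g x + (starRingEnd ℂ) m • g y := by
    intro x y l m
    rw [gadd, Pall l x, Pall m y]
  -- anti-multiplicativity of g
  have gmul : ∀ x y : E, g (x * y) = g y * g x := by
    intro x y
    have hmono : Tendsto (fun n : ℕ => 2 * n) atTop atTop :=
      tendsto_atTop_atTop_of_monotone (fun a b hab => by omega) (fun b => ⟨b, by omega⟩)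
    have h1 : Tendsto (fun n : ℕ => S (2*n) (x*y)) atTop (𝓝 (g (x*y))) :=
      (hg (x*y)).comp hmono
    have h2 : Tendsto (fun n : ℕ => S n y * S n x) atTop (𝓝 (g y * g x)) :=
      (hg y).mul (hg x)
    have hq4_0 : (0:ℝ) ≤ (2:ℝ)^r / 4 := by positivity
    have hq4_1 : (2:ℝ)^r / 4 < 1 := by linarith
    have e : ∀ n : ℕ, S (2*n) (x*y) - S n y * S n x
        = ((2:ℂ)^(2*n))⁻¹ •
          (f (((2:ℂ)^n • x) * ((2:ℂ)^n • y)) - f ((2:ℂ)^n • y) * f ((2:ℂ)^n • x)) := by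
      intro n
      have hsm : ((2:ℂ)^n • x) * ((2:ℂ)^n • y) = (2:ℂ)^(2*n) • (x*y) := by
        rw [smul_mul_smul_comm, ← pow_add, two_mul]
      simp only [S, smul_sub, hsm]
      congr 1
      rw [smul_mul_smul_comm, ← mul_inv, ← pow_add, ← two_mul]
    have hdiff : Tendsto (fun n : ℕ => S (2*n) (x*y) - S n y * S n x) atTop (𝓝 0) := by
      apply squeeze_zero_norm (a := fun n => θ * (‖x‖^r + ‖y‖^r) * ((2:ℝ)^r/4) ^ n)
      · intro n
        rw [e n, norm_smul, hnorm2ninv]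
        have hb := hmul ((2:ℂ)^n • x) ((2:ℂ)^n • y)
        rw [hrpow_smul, hrpow_smul] at hb
        have h4 : ((2:ℝ) ^ (2*n))⁻¹ = (4:ℝ)⁻¹ ^ n := by
          rw [pow_mul, ← inv_pow]
          norm_num
        calc ((2:ℝ)^(2*n))⁻¹ * ‖f (((2:ℂ)^n • x) * ((2:ℂ)^n • y))
              - f ((2:ℂ)^n • y) * f ((2:ℂ)^n • x)‖
            ≤ ((2:ℝ)^(2*n))⁻¹ * (θ * (((2:ℝ)^r)^n * ‖x‖^r + ((2:ℝ)^r)^n * ‖y‖^r)) :=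
              mul_le_mul_of_nonneg_left hb (by positivity)
          _ = θ * (‖x‖^r + ‖y‖^r) * ((2:ℝ)^r/4) ^ n := by
              rw [h4, div_pow, inv_pow]
              field_simp
      · have := (tendsto_pow_atTop_nhds_zero_of_lt_one hq4_0 hq4_1).const_mul
          (θ * (‖x‖^r + ‖y‖^r))
        simpa using this
    have := tendsto_nhds_unique (h1.sub h2) hdiff
    exact sub_eq_zero.mp this
  -- conclusion
  refine ⟨g, ⟨glin, gmul, hgg⟩, hgf, ?_⟩
  intro J hJ hJb
  have hJ0 : J 0 = 0 := by
    have h := hJ.1 0 0 0 0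
    simpa using h
  have hJsmul : ∀ (l : ℂ) (x : E), J (l • x) = (starRingEnd ℂ) l • J x := by
    intro l x
    have h := hJ.1 x 0 l 0
    simpa [hJ0] using h
  have hc : ∀ n : ℕ, (starRingEnd ℂ) ((2:ℂ)^n) = (2:ℂ)^n := by
    intro n
    rw [map_pow, map_ofNat]
  funext x
  have key : ∀ n : ℕ, ‖J x - g x‖ ≤ 2 * (2 * θ / (2 - (2:ℝ)^r)) * ‖x‖^r * q ^ n := by
    intro n
    have hJx : J x = ((2:ℂ)^n)⁻¹ • J ((2:ℂ)^n • x) := by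
      rw [hJsmul, hc, smul_smul,
        inv_mul_cancel₀ (pow_ne_zero n (two_ne_zero' ℂ)), one_smul]
    have hgx : g x = ((2:ℂ)^n)⁻¹ • g ((2:ℂ)^n • x) := by
      rw [Pall ((2:ℂ)^n) x, hc, smul_smul,
        inv_mul_cancel₀ (pow_ne_zero n (two_ne_zero' ℂ)), one_smul]
    have hJfn := hJb ((2:ℂ)^n • x)
    have hgfn := hgf ((2:ℂ)^n • x)
    rw [hrpow_smul] at hJfn hgfn
    have hdpos : (0:ℝ) ≤ 2 * θ / (2 - (2:ℝ)^r) := by positivity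
    calc ‖J x - g x‖
        = ‖((2:ℂ)^n)⁻¹ • (J ((2:ℂ)^n • x) - g ((2:ℂ)^n • x))‖ := by
          rw [smul_sub, ← hJx, ← hgx]
      _ = ((2:ℝ)^n)⁻¹ * ‖J ((2:ℂ)^n • x) - g ((2:ℂ)^n • x)‖ := by
          rw [norm_smul, hnorm2ninv]
      _ ≤ ((2:ℝ)^n)⁻¹ * (‖J ((2:ℂ)^n • x) - f ((2:ℂ)^n • x)‖
            + ‖f ((2:ℂ)^n • x) - g ((2:ℂ)^n • x)‖) := by
          apply mul_le_mul_of_nonneg_left _ (by positivity)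
          rw [show J ((2:ℂ)^n • x) - g ((2:ℂ)^n • x)
              = (J ((2:ℂ)^n • x) - f ((2:ℂ)^n • x))
                + (f ((2:ℂ)^n • x) - g ((2:ℂ)^n • x)) by abel]
          exact norm_add_le _ _
      _ ≤ ((2:ℝ)^n)⁻¹ * (2 * θ / (2 - (2:ℝ)^r) * (((2:ℝ)^r)^n * ‖x‖^r)
            + 2 * θ / (2 - (2:ℝ)^r) * (((2:ℝ)^r)^n * ‖x‖^r)) := by
          apply mul_le_mul_of_nonneg_left _ (by positivity)
          refine add_le_add hJfn ?_
          rw [norm_sub_rev]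
          exact hgfn
      _ = 2 * (2 * θ / (2 - (2:ℝ)^r)) * ‖x‖^r * q ^ n := by
          rw [hqdef, div_pow]
          field_simp
          ring
  have hto0 : Tendsto (fun n : ℕ => 2 * (2 * θ / (2 - (2:ℝ)^r)) * ‖x‖^r * q ^ n)
      atTop (𝓝 0) := by
    have := (tendsto_pow_atTop_nhds_zero_of_lt_one hq0 hq1).const_mul
      (2 * (2 * θ / (2 - (2:ℝ)^r)) * ‖x‖^r)
    simpa [mul_assoc] using this
  have hle0 : ‖J x - g x‖ ≤ 0 := ge_of_tendsto' hto0 (fun n => key n)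
  have : ‖J x - g x‖ = 0 := le_antisymm hle0 (norm_nonneg _)
  exact sub_eq_zero.mp (norm_eq_zero.mp this)
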